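/- Assume the Kalman condition holds and that R₃(τ) is invertible for every τ ∈ (0,T]. Then: (i) det(R₃(τ)) > 0 for every τ ∈ (0,T]; (ii) for all 0 < τ ≤ s ≤ T, the matrix R₃(τ)⁻¹ R₃(τ−s) R₃(−s)⁻¹ equals S(τ) − S(s) (where S(r) = R₃(r)⁻¹R₄(r)) and is positive semidefinite; (iii) if Hψ is a symmetric n×n matrix such that Hψ + R₃(s)⁻¹R₄(s) is positive semidefinite for every s ∈ (0,T], then R₃(s)⁻¹(R₃(s)Hψ + R₄(s)) is symmetric and positive semidefinite for every s ∈ (0,T]. -/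

import Mathlib

open Matrix MeasureTheory Filter Topology

noncomputable section

namespace LQ

variable {n m : ℕ}

def Om (n : ℕ) : Matrix (Fin n ⊕ Fin n) (Fin n ⊕ Fin n) ℝ :=
  Matrix.fromBlocks 0 1 (-1) 0

def Ham (A Q : Matrix (Fin n) (Fin n) ℝ) (B : Matrix (Fin n) (Fin m) ℝ) :
    Matrix (Fin n ⊕ Fin n) (Fin n ⊕ Fin n) ℝ :=
  Matrix.fromBlocks (B * Bᵀ) A Aᵀ Q

def flow (A Q : Matrix (Fin n) (Fin n) ℝ) (B : Matrix (Fin n) (Fin m) ℝ) (τ : ℝ) :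
    Matrix (Fin n ⊕ Fin n) (Fin n ⊕ Fin n) ℝ :=
  NormedSpace.exp ((-τ) • (Om n * Ham A Q B))

def R1 (A Q : Matrix (Fin n) (Fin n) ℝ) (B : Matrix (Fin n) (Fin m) ℝ) (τ : ℝ) :
    Matrix (Fin n) (Fin n) ℝ := (flow A Q B τ).toBlocks₁₁

def R2 (A Q : Matrix (Fin n) (Fin n) ℝ) (B : Matrix (Fin n) (Fin m) ℝ) (τ : ℝ) :
    Matrix (Fin n) (Fin n) ℝ := (flow A Q B τ).toBlocks₁₂

def R3 (A Q : Matrix (Fin n) (Fin n) ℝ) (B : Matrix (Fin n) (Fin m) ℝ) (τ : ℝ) :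
    Matrix (Fin n) (Fin n) ℝ := (flow A Q B τ).toBlocks₂₁

def R4 (A Q : Matrix (Fin n) (Fin n) ℝ) (B : Matrix (Fin n) (Fin m) ℝ) (τ : ℝ) :
    Matrix (Fin n) (Fin n) ℝ := (flow A Q B τ).toBlocks₂₂

def Kalman (A : Matrix (Fin n) (Fin n) ℝ) (B : Matrix (Fin n) (Fin m) ℝ) : Prop :=
  Submodule.span ℝ
    {v : Fin n → ℝ | ∃ j : Fin n, ∃ i : Fin m, v = (A ^ (j : ℕ)).mulVec (Bᵀ i)} = ⊤

lemma om_eq : Om n = Matrix.fromBlocks 0 1 (-1) 0 := rfl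

lemma ham_eq : Ham A Q B = Matrix.fromBlocks (B * Bᵀ) A Aᵀ Q := rfl

lemma om_mul_om : Om n * Om n = -1 := by
  simp [Om, Matrix.fromBlocks_multiply, Matrix.fromBlocks_neg, ← Matrix.fromBlocks_one]

lemma om_mul_neg_om : Om n * (-Om n) = 1 := by
  rw [Matrix.mul_neg, om_mul_om, neg_neg]

lemma om_inv : (Om n)⁻¹ = -Om n := Matrix.inv_eq_right_inv om_mul_neg_om

lemma neg_om_mul_om : (-Om n) * Om n = 1 := by
  rw [Matrix.neg_mul, om_mul_om, neg_neg]

lemma isUnit_om : IsUnit (Om n) :=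
  ⟨⟨Om n, -Om n, om_mul_neg_om, neg_om_mul_om⟩, rfl⟩

lemma ham_transpose (A Q : Matrix (Fin n) (Fin n) ℝ) (B : Matrix (Fin n) (Fin m) ℝ)
    (hQ : Q.IsSymm) : (Ham A Q B)ᵀ = Ham A Q B := by
  simp [Ham, Matrix.fromBlocks_transpose, Matrix.transpose_mul, hQ.eq]

lemma om_transpose : (Om n)ᵀ = -Om n := by
  simp [Om, Matrix.fromBlocks_transpose, Matrix.fromBlocks_neg]


section FlowLemmas

variable (A Q : Matrix (Fin n) (Fin n) ℝ) (B : Matrix (Fin n) (Fin m) ℝ)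

lemma flow_zero : flow A Q B 0 = 1 := by
  simp [flow, NormedSpace.exp_zero]

lemma flow_add (a b : ℝ) : flow A Q B (a + b) = flow A Q B a * flow A Q B b := by
  rw [flow, flow, flow, show (-(a+b)) • (Om n * Ham A Q B) =
    (-a) • (Om n * Ham A Q B) + (-b) • (Om n * Ham A Q B) by rw [← add_smul]; ring_nf]
  exact Matrix.exp_add_of_commute _ _ (Commute.refl _ |>.smul_left _ |>.smul_right _)

lemma flow_mul_flow_neg (τ : ℝ) : flow A Q B τ * flow A Q B (-τ) = 1 := by
  rw [← flow_add, add_neg_cancel, flow_zero]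

lemma flow_neg_mul_flow (τ : ℝ) : flow A Q B (-τ) * flow A Q B τ = 1 := by
  rw [← flow_add, neg_add_cancel, flow_zero]

lemma isUnit_flow (τ : ℝ) : IsUnit (flow A Q B τ) :=
  ⟨⟨flow A Q B τ, flow A Q B (-τ), flow_mul_flow_neg A Q B τ, flow_neg_mul_flow A Q B τ⟩, rfl⟩

lemma flow_transpose (hQ : Q.IsSymm) (τ : ℝ) :
    (flow A Q B τ)ᵀ = NormedSpace.exp (τ • (Ham A Q B * Om n)) := by
  rw [flow, ← Matrix.exp_transpose, Matrix.transpose_smul, Matrix.transpose_mul,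
    ham_transpose A Q B hQ, om_transpose, Matrix.mul_neg, smul_neg, neg_smul, neg_neg]

lemma om_mul_exp (Y : Matrix (Fin n ⊕ Fin n) (Fin n ⊕ Fin n) ℝ) :
    Om n * NormedSpace.exp Y = NormedSpace.exp (Om n * Y * (-Om n)) * Om n := by
  have h := Matrix.exp_conj (Om n) Y isUnit_om
  rw [om_inv] at h
  rw [h, Matrix.mul_assoc, neg_om_mul_om, Matrix.mul_one]

lemma symp (hQ : Q.IsSymm) (τ : ℝ) :
    flow A Q B τ * Om n * (flow A Q B τ)ᵀ = Om n := by
  rw [flow_transpose A Q B hQ, Matrix.mul_assoc, om_mul_exp]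
  have hc : Om n * (τ • (Ham A Q B * Om n)) * (-Om n) = τ • (Om n * Ham A Q B) := by
    rw [Matrix.mul_smul, Matrix.smul_mul]
    congr 1
    rw [Matrix.mul_assoc, Matrix.mul_assoc, om_mul_neg_om, Matrix.mul_one]
  rw [hc, flow, ← Matrix.mul_assoc, ← Matrix.exp_add_of_commute _ _
    (Commute.refl (Om n * Ham A Q B) |>.smul_left _ |>.smul_right _)]
  simp [NormedSpace.exp_zero]

lemma symp' (hQ : Q.IsSymm) (τ : ℝ) :
    (flow A Q B τ)ᵀ * Om n * flow A Q B τ = Om n := by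
  have hc : Om n * (τ • (Om n * Ham A Q B)) * (-Om n) = τ • (Ham A Q B * Om n) := by
    rw [Matrix.mul_smul, Matrix.smul_mul]
    congr 1
    rw [← Matrix.mul_assoc (Om n) (Om n) (Ham A Q B), om_mul_om, neg_one_mul,
      Matrix.neg_mul, Matrix.mul_neg, neg_neg]
  have h := om_mul_exp (τ • (Om n * Ham A Q B))
  rw [hc] at h
  rw [flow_transpose A Q B hQ, ← h, flow, Matrix.mul_assoc, ← Matrix.exp_add_of_commute _ _
    (Commute.refl (Om n * Ham A Q B) |>.smul_left _ |>.smul_right _)]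
  simp [NormedSpace.exp_zero]

lemma flow_neg_eq (hQ : Q.IsSymm) (τ : ℝ) :
    flow A Q B (-τ) = -(Om n * (flow A Q B τ)ᵀ * Om n) := by
  have h1 : flow A Q B τ * flow A Q B (-τ) = 1 := flow_mul_flow_neg A Q B τ
  have h2 : flow A Q B τ * -(Om n * (flow A Q B τ)ᵀ * Om n) = 1 := by
    have hs := symp A Q B hQ τ
    rw [Matrix.mul_neg, ← Matrix.mul_assoc, ← Matrix.mul_assoc, hs, om_mul_om, neg_neg]
  exact Matrix.right_inv_eq_right_inv h1 h2

lemma flow_blocks (τ : ℝ) : flow A Q B τ =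
    Matrix.fromBlocks (R1 A Q B τ) (R2 A Q B τ) (R3 A Q B τ) (R4 A Q B τ) :=
  (Matrix.fromBlocks_toBlocks _).symm

lemma flow_neg_blocks (hQ : Q.IsSymm) (τ : ℝ) :
    flow A Q B (-τ) = Matrix.fromBlocks ((R4 A Q B τ)ᵀ) (-(R2 A Q B τ)ᵀ)
      (-(R3 A Q B τ)ᵀ) ((R1 A Q B τ)ᵀ) := by
  rw [flow_neg_eq A Q B hQ τ, flow_blocks A Q B τ, om_eq, Matrix.fromBlocks_transpose,
    Matrix.fromBlocks_multiply, Matrix.fromBlocks_multiply, Matrix.fromBlocks_neg]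
  congr 1 <;> simp

lemma R1_neg (hQ : Q.IsSymm) (τ : ℝ) : R1 A Q B (-τ) = (R4 A Q B τ)ᵀ := by
  rw [R1, flow_neg_blocks A Q B hQ τ]; rfl

lemma R3_neg (hQ : Q.IsSymm) (τ : ℝ) : R3 A Q B (-τ) = -(R3 A Q B τ)ᵀ := by
  rw [R3, flow_neg_blocks A Q B hQ τ]; rfl

lemma symp_blocks (hQ : Q.IsSymm) (τ : ℝ) :
    (R1 A Q B τ)ᵀ * R3 A Q B τ = (R3 A Q B τ)ᵀ * R1 A Q B τ ∧
    (R1 A Q B τ)ᵀ * R4 A Q B τ - (R3 A Q B τ)ᵀ * R2 A Q B τ = 1 := by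
  have h := symp' A Q B hQ τ
  rw [flow_blocks A Q B τ, Matrix.fromBlocks_transpose, om_eq,
    Matrix.fromBlocks_multiply, Matrix.fromBlocks_multiply] at h
  have h11 := congrArg Matrix.toBlocks₁₁ h
  have h12 := congrArg Matrix.toBlocks₁₂ h
  simp only [Matrix.toBlocks_fromBlocks₁₁, Matrix.toBlocks_fromBlocks₁₂,
    Matrix.mul_zero, Matrix.zero_mul, Matrix.mul_one, Matrix.one_mul, add_zero, zero_add,
    Matrix.mul_neg, Matrix.neg_mul] at h11 h12
  constructor
  · linear_combination (norm := abel) h11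
  · linear_combination (norm := abel) h12

lemma symp_blocks' (hQ : Q.IsSymm) (τ : ℝ) :
    R3 A Q B τ * (R4 A Q B τ)ᵀ = R4 A Q B τ * (R3 A Q B τ)ᵀ := by
  have h := symp A Q B hQ τ
  rw [flow_blocks A Q B τ, Matrix.fromBlocks_transpose, om_eq,
    Matrix.fromBlocks_multiply, Matrix.fromBlocks_multiply] at h
  have h22 := congrArg Matrix.toBlocks₂₂ h
  simp only [Matrix.toBlocks_fromBlocks₂₂,
    Matrix.mul_zero, Matrix.zero_mul, Matrix.mul_one, Matrix.one_mul, add_zero, zero_add,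
    Matrix.mul_neg, Matrix.neg_mul] at h22
  linear_combination (norm := abel) h22

lemma R3_sub (τ s : ℝ) : R3 A Q B (τ - s) =
    R3 A Q B τ * R1 A Q B (-s) + R4 A Q B τ * R3 A Q B (-s) := by
  have h : flow A Q B (τ - s) = flow A Q B τ * flow A Q B (-s) := by
    rw [← flow_add]; ring_nf
  rw [R3, h, flow_blocks A Q B τ, flow_blocks A Q B (-s), Matrix.fromBlocks_multiply,
    Matrix.toBlocks_fromBlocks₂₁]

lemma S_symm (hQ : Q.IsSymm) (τ : ℝ) (hU : IsUnit (R3 A Q B τ)) :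
    ((R3 A Q B τ)⁻¹ * R4 A Q B τ)ᵀ = (R3 A Q B τ)⁻¹ * R4 A Q B τ := by
  have hd : IsUnit (R3 A Q B τ).det := (Matrix.isUnit_iff_isUnit_det _).mp hU
  have hdT : IsUnit ((R3 A Q B τ)ᵀ).det := by rwa [Matrix.det_transpose]
  have key : R3 A Q B τ * ((R4 A Q B τ)ᵀ * ((R3 A Q B τ)ᵀ)⁻¹) = R4 A Q B τ := by
    rw [← Matrix.mul_assoc, symp_blocks' A Q B hQ τ, Matrix.mul_nonsing_inv_cancel_right _ _ hdT]
  rw [Matrix.transpose_mul, Matrix.transpose_nonsing_inv]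
  conv_rhs => rw [← key]
  rw [Matrix.nonsing_inv_mul_cancel_left _ _ hd]

lemma inv_neg' (X : Matrix (Fin n) (Fin n) ℝ) : (-X)⁻¹ = -(X⁻¹) := by
  by_cases h : IsUnit X.det
  · refine Matrix.inv_eq_right_inv ?_
    rw [Matrix.neg_mul, Matrix.mul_neg, neg_neg, Matrix.mul_nonsing_inv _ h]
  · have h' : ¬ IsUnit (-X).det := by
      rw [Matrix.det_neg]
      intro hu
      exact h (isUnit_of_mul_isUnit_right hu)
    rw [Matrix.nonsing_inv_apply_not_isUnit _ h', Matrix.nonsing_inv_apply_not_isUnit _ h, neg_zero]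

lemma S_eq (hQ : Q.IsSymm) (τ s : ℝ) (hUτ : IsUnit (R3 A Q B τ)) (hUs : IsUnit (R3 A Q B s)) :
    (R3 A Q B τ)⁻¹ * R3 A Q B (τ - s) * (R3 A Q B (-s))⁻¹ =
      (R3 A Q B τ)⁻¹ * R4 A Q B τ - (R3 A Q B s)⁻¹ * R4 A Q B s := by
  have hdτ : IsUnit (R3 A Q B τ).det := (Matrix.isUnit_iff_isUnit_det _).mp hUτ
  have hds : IsUnit (R3 A Q B s).det := (Matrix.isUnit_iff_isUnit_det _).mp hUs
  have hdsT : IsUnit ((R3 A Q B s)ᵀ).det := by rwa [Matrix.det_transpose]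
  have hs4 : (R4 A Q B s)ᵀ * ((R3 A Q B s)ᵀ)⁻¹ = (R3 A Q B s)⁻¹ * R4 A Q B s := by
    rw [← Matrix.transpose_nonsing_inv, ← Matrix.transpose_mul, S_symm A Q B hQ s hUs]
  rw [R3_sub, R1_neg A Q B hQ s, R3_neg A Q B hQ s, inv_neg']
  rw [Matrix.mul_add, Matrix.add_mul, Matrix.nonsing_inv_mul_cancel_left _ _ hdτ]
  simp only [Matrix.mul_neg, Matrix.neg_mul, neg_neg]
  rw [hs4, Matrix.mul_assoc ((R3 A Q B τ)⁻¹), Matrix.mul_assoc (R4 A Q B τ),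
    Matrix.mul_nonsing_inv _ hdsT, Matrix.mul_one, neg_add_eq_sub]

lemma Sderiv_alg (hQ : Q.IsSymm) (r : ℝ) (hU : IsUnit (R3 A Q B r)) :
    -((R3 A Q B r)⁻¹ * (B * Bᵀ * R1 A Q B r + A * R3 A Q B r) * (R3 A Q B r)⁻¹) * R4 A Q B r +
      (R3 A Q B r)⁻¹ * (B * Bᵀ * R2 A Q B r + A * R4 A Q B r) =
    -((R3 A Q B r)⁻¹ * (B * Bᵀ) * ((R3 A Q B r)⁻¹)ᵀ) := by
  set C := (R3 A Q B r)⁻¹ with hC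
  have hd : IsUnit (R3 A Q B r).det := (Matrix.isUnit_iff_isUnit_det _).mp hU
  have hdT : IsUnit ((R3 A Q B r)ᵀ).det := by rwa [Matrix.det_transpose]
  have hR3C : R3 A Q B r * C = 1 := Matrix.mul_nonsing_inv _ hd
  have h5 : (R3 A Q B r)ᵀ * (R2 A Q B r - R1 A Q B r * (C * R4 A Q B r)) = -1 := by
    rw [Matrix.mul_sub, ← Matrix.mul_assoc, ← (symp_blocks A Q B hQ r).1, Matrix.mul_assoc,
      ← Matrix.mul_assoc (R3 A Q B r) C, hR3C, Matrix.one_mul]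
    linear_combination (norm := abel) -(symp_blocks A Q B hQ r).2
  have hkey : R1 A Q B r * (C * R4 A Q B r) = R2 A Q B r + Cᵀ := by
    have h6 : R2 A Q B r - R1 A Q B r * (C * R4 A Q B r) = -(Cᵀ) :=
      calc R2 A Q B r - R1 A Q B r * (C * R4 A Q B r)
          = ((R3 A Q B r)ᵀ)⁻¹ * ((R3 A Q B r)ᵀ *
              (R2 A Q B r - R1 A Q B r * (C * R4 A Q B r))) :=
            (Matrix.nonsing_inv_mul_cancel_left _ _ hdT).symm
        _ = ((R3 A Q B r)ᵀ)⁻¹ * (-1) := by rw [h5]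
        _ = -(Cᵀ) := by rw [Matrix.mul_neg, Matrix.mul_one, hC, Matrix.transpose_nonsing_inv]
    linear_combination (norm := abel) -h6
  simp only [Matrix.mul_add, Matrix.add_mul, Matrix.neg_mul, Matrix.mul_assoc]
  rw [← Matrix.mul_assoc (R3 A Q B r) C, hR3C, Matrix.one_mul, hkey]
  simp only [Matrix.mul_add, Matrix.add_mul, Matrix.mul_assoc]
  abel

section Deriv

attribute [local instance] Matrix.linftyOpSemiNormedRing Matrix.linftyOpNormedRing
  Matrix.linftyOpNormedAlgebra

lemma hasDerivAt_flow (r : ℝ) :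
    HasDerivAt (flow A Q B) (-(Om n * Ham A Q B) * flow A Q B r) r := by
  have h := hasDerivAt_exp_smul_const' (𝕂 := ℝ) (-(Om n * Ham A Q B)) r
  have hfun : (fun u : ℝ => NormedSpace.exp (u • -(Om n * Ham A Q B))) = flow A Q B := by
    funext u
    rw [flow, smul_neg, neg_smul]
  replace h := h.congr_of_eventuallyEq (Filter.Eventually.of_forall fun u => (congrFun hfun u).symm)
  rw [show r • -(Om n * Ham A Q B) = (-r) • (Om n * Ham A Q B) by rw [smul_neg, neg_smul]] at h
  exact h

lemma toBlocks21_deriv (r : ℝ) :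
    (-(Om n * Ham A Q B) * flow A Q B r).toBlocks₂₁ =
      B * Bᵀ * R1 A Q B r + A * R3 A Q B r := by
  rw [flow_blocks A Q B r, om_eq, ham_eq, Matrix.fromBlocks_multiply, Matrix.fromBlocks_neg,
    Matrix.fromBlocks_multiply, Matrix.toBlocks_fromBlocks₂₁]
  simp

lemma toBlocks22_deriv (r : ℝ) :
    (-(Om n * Ham A Q B) * flow A Q B r).toBlocks₂₂ =
      B * Bᵀ * R2 A Q B r + A * R4 A Q B r := by
  rw [flow_blocks A Q B r, om_eq, ham_eq, Matrix.fromBlocks_multiply, Matrix.fromBlocks_neg,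
    Matrix.fromBlocks_multiply, Matrix.toBlocks_fromBlocks₂₂]
  simp

lemma hasDerivAt_R3 (r : ℝ) :
    HasDerivAt (R3 A Q B) (B * Bᵀ * R1 A Q B r + A * R3 A Q B r) r := by
  let L : Matrix (Fin n ⊕ Fin n) (Fin n ⊕ Fin n) ℝ →ₗ[ℝ] Matrix (Fin n) (Fin n) ℝ :=
    { toFun := Matrix.toBlocks₂₁, map_add' := fun _ _ => rfl, map_smul' := fun _ _ => rfl }
  let Lc : Matrix (Fin n ⊕ Fin n) (Fin n ⊕ Fin n) ℝ →L[ℝ] Matrix (Fin n) (Fin n) ℝ :=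
    ⟨L, L.continuous_of_finiteDimensional⟩
  have h := Lc.hasFDerivAt.comp_hasDerivAt r (hasDerivAt_flow A Q B r)
  replace h : HasDerivAt (R3 A Q B) ((-(Om n * Ham A Q B) * flow A Q B r).toBlocks₂₁) r := h
  rw [toBlocks21_deriv A Q B r] at h
  exact h

lemma hasDerivAt_R4 (r : ℝ) :
    HasDerivAt (R4 A Q B) (B * Bᵀ * R2 A Q B r + A * R4 A Q B r) r := by
  let L : Matrix (Fin n ⊕ Fin n) (Fin n ⊕ Fin n) ℝ →ₗ[ℝ] Matrix (Fin n) (Fin n) ℝ :=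
    { toFun := Matrix.toBlocks₂₂, map_add' := fun _ _ => rfl, map_smul' := fun _ _ => rfl }
  let Lc : Matrix (Fin n ⊕ Fin n) (Fin n ⊕ Fin n) ℝ →L[ℝ] Matrix (Fin n) (Fin n) ℝ :=
    ⟨L, L.continuous_of_finiteDimensional⟩
  have h := Lc.hasFDerivAt.comp_hasDerivAt r (hasDerivAt_flow A Q B r)
  replace h : HasDerivAt (R4 A Q B) ((-(Om n * Ham A Q B) * flow A Q B r).toBlocks₂₂) r := h
  rw [toBlocks22_deriv A Q B r] at h
  exact h

lemma hasDerivAt_quad (x : Fin n → ℝ) {f : ℝ → Matrix (Fin n) (Fin n) ℝ}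
    {f' : Matrix (Fin n) (Fin n) ℝ} {r : ℝ} (hf : HasDerivAt f f' r) :
    HasDerivAt (fun u => x ⬝ᵥ (f u).mulVec x) (x ⬝ᵥ f'.mulVec x) r := by
  let L : Matrix (Fin n) (Fin n) ℝ →ₗ[ℝ] ℝ :=
    { toFun := fun M => x ⬝ᵥ M.mulVec x,
      map_add' := fun M N => by simp [Matrix.add_mulVec, dotProduct_add],
      map_smul' := fun c M => by simp [Matrix.smul_mulVec, dotProduct_smul] }
  let Lc : Matrix (Fin n) (Fin n) ℝ →L[ℝ] ℝ := ⟨L, L.continuous_of_finiteDimensional⟩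
  exact Lc.hasFDerivAt.comp_hasDerivAt r hf

lemma hasDerivAt_quadS (hQ : Q.IsSymm) (x : Fin n → ℝ) (r : ℝ) (hU : IsUnit (R3 A Q B r)) :
    HasDerivAt (fun u => x ⬝ᵥ ((Ring.inverse (R3 A Q B u)) * R4 A Q B u).mulVec x)
      (x ⬝ᵥ (-((R3 A Q B r)⁻¹ * (B * Bᵀ) * ((R3 A Q B r)⁻¹)ᵀ)).mulVec x) r := by
  have hd3 := hasDerivAt_R3 A Q B r
  have hd4 := hasDerivAt_R4 A Q B r
  have hinv : HasDerivAt (fun u => Ring.inverse (R3 A Q B u))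
      (-((R3 A Q B r)⁻¹ * (B * Bᵀ * R1 A Q B r + A * R3 A Q B r) * (R3 A Q B r)⁻¹)) r := by
    have hf := hasFDerivAt_ringInverse (𝕜 := ℝ) hU.unit
    rw [hU.unit_spec] at hf
    have h := hf.comp_hasDerivAt r hd3
    simp only [ContinuousLinearMap.neg_apply, ContinuousLinearMap.mulLeftRight_apply] at h
    have hc : (↑hU.unit⁻¹ : Matrix (Fin n) (Fin n) ℝ) = (R3 A Q B r)⁻¹ := by
      rw [Matrix.coe_units_inv, hU.unit_spec]
    rw [hc] at h
    exact h
  have hmul := hinv.mul hd4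
  have h := hasDerivAt_quad x hmul
  rw [← Matrix.nonsing_inv_eq_ringInverse] at h
  rw [show -((R3 A Q B r)⁻¹ * (B * Bᵀ * R1 A Q B r + A * R3 A Q B r) * (R3 A Q B r)⁻¹) *
        R4 A Q B r + (R3 A Q B r)⁻¹ * (B * Bᵀ * R2 A Q B r + A * R4 A Q B r) =
      -((R3 A Q B r)⁻¹ * (B * Bᵀ) * ((R3 A Q B r)⁻¹)ᵀ) from Sderiv_alg A Q B hQ r hU] at h
  exact h

lemma continuous_R3_entry (i j : Fin n) :
    Continuous fun u : ℝ => R3 A Q B u i j := by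
  have hR3c : Continuous (R3 A Q B) :=
    continuous_iff_continuousAt.mpr fun r => (hasDerivAt_R3 A Q B r).continuousAt
  let L : Matrix (Fin n) (Fin n) ℝ →ₗ[ℝ] ℝ :=
    { toFun := fun M => M i j, map_add' := fun _ _ => rfl, map_smul' := fun _ _ => rfl }
  exact (L.continuous_of_finiteDimensional).comp hR3c

end Deriv

lemma quad_nonneg (C : Matrix (Fin n) (Fin n) ℝ) (x : Fin n → ℝ) :
    0 ≤ x ⬝ᵥ (C * (B * Bᵀ) * Cᵀ).mulVec x := by
  have h := (Matrix.posSemidef_self_mul_conjTranspose (C * B)).dotProduct_mulVec_nonneg x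
  simpa [Matrix.conjTranspose_eq_transpose_of_trivial, Matrix.transpose_mul,
    Matrix.mul_assoc] using h

lemma quad_antitone (hQ : Q.IsSymm) (T : ℝ)
    (hR3u : ∀ τ ∈ Set.Ioc 0 T, IsUnit (R3 A Q B τ)) (x : Fin n → ℝ)
    (τ s : ℝ) (hτ : 0 < τ) (hτs : τ ≤ s) (hsT : s ≤ T) :
    x ⬝ᵥ (((R3 A Q B s)⁻¹ * R4 A Q B s)).mulVec x ≤
      x ⬝ᵥ (((R3 A Q B τ)⁻¹ * R4 A Q B τ)).mulVec x := by
  have hsub : Set.Icc τ s ⊆ Set.Ioc 0 T := fun u hu =>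
    ⟨lt_of_lt_of_le hτ hu.1, le_trans hu.2 hsT⟩
  set g : ℝ → ℝ := fun u => x ⬝ᵥ ((Ring.inverse (R3 A Q B u)) * R4 A Q B u).mulVec x with hg
  have hderiv : ∀ u ∈ Set.Icc τ s, HasDerivAt g
      (x ⬝ᵥ (-((R3 A Q B u)⁻¹ * (B * Bᵀ) * ((R3 A Q B u)⁻¹)ᵀ)).mulVec x) u :=
    fun u hu => hasDerivAt_quadS A Q B hQ x u (hR3u u (hsub hu))
  have hanti : AntitoneOn g (Set.Icc τ s) := by
    apply antitoneOn_of_deriv_nonpos (convex_Icc τ s)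
    · exact fun u hu => (hderiv u hu).continuousAt.continuousWithinAt
    · intro u hu
      rw [interior_Icc] at hu
      exact ((hderiv u (Set.Ioo_subset_Icc_self hu)).differentiableAt).differentiableWithinAt
    · intro u hu
      rw [interior_Icc] at hu
      rw [(hderiv u (Set.Ioo_subset_Icc_self hu)).deriv]
      have := quad_nonneg B ((R3 A Q B u)⁻¹) x
      simp only [Matrix.neg_mulVec, dotProduct_neg]
      linarith
  have h := hanti (Set.left_mem_Icc.mpr hτs) (Set.right_mem_Icc.mpr hτs) hτs
  simpa only [hg, ← Matrix.nonsing_inv_eq_ringInverse] using h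

lemma part2 (hQ : Q.IsSymm) (T : ℝ)
    (hR3u : ∀ τ ∈ Set.Ioc 0 T, IsUnit (R3 A Q B τ))
    (τ s : ℝ) (hτ : 0 < τ) (hτs : τ ≤ s) (hsT : s ≤ T) :
    (R3 A Q B τ)⁻¹ * R3 A Q B (τ - s) * (R3 A Q B (-s))⁻¹ =
      (R3 A Q B τ)⁻¹ * R4 A Q B τ - (R3 A Q B s)⁻¹ * R4 A Q B s ∧
    ((R3 A Q B τ)⁻¹ * R3 A Q B (τ - s) * (R3 A Q B (-s))⁻¹).PosSemidef := by
  have hUτ : IsUnit (R3 A Q B τ) := hR3u τ ⟨hτ, le_trans hτs hsT⟩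
  have hUs : IsUnit (R3 A Q B s) := hR3u s ⟨lt_of_lt_of_le hτ hτs, hsT⟩
  have heq := S_eq A Q B hQ τ s hUτ hUs
  refine ⟨heq, ?_⟩
  rw [heq]
  refine Matrix.PosSemidef.of_dotProduct_mulVec_nonneg ?_ ?_
  · show _ᴴ = _
    rw [Matrix.conjTranspose_eq_transpose_of_trivial, Matrix.transpose_sub,
      S_symm A Q B hQ τ hUτ, S_symm A Q B hQ s hUs]
  · intro y
    have h := quad_antitone A Q B hQ T hR3u y τ s hτ hτs hsT
    simp only [Matrix.sub_mulVec, dotProduct_sub, star_trivial]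
    linarith

lemma part1 (hQ : Q.IsSymm) (T : ℝ) (hT : 0 < T)
    (hR3u : ∀ τ ∈ Set.Ioc 0 T, IsUnit (R3 A Q B τ)) :
    ∀ τ ∈ Set.Ioc (0:ℝ) T, 0 < (R3 A Q B τ).det := by
  have hcont : Continuous fun u => (R3 A Q B u).det :=
    Continuous.matrix_det (continuous_matrix fun i j => continuous_R3_entry A Q B i j)
  have hdet_ne : ∀ u ∈ Set.Ioc (0:ℝ) T, (R3 A Q B u).det ≠ 0 := fun u hu =>
    ((Matrix.isUnit_iff_isUnit_det _).mp (hR3u u hu)).ne_zero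
  have hhalf : (0:ℝ) < T/2 := half_pos hT
  have hhalfT : T/2 ≤ T := half_le_self hT.le
  have ha : (R3 A Q B (T/2)).det ≠ 0 := hdet_ne _ ⟨hhalf, hhalfT⟩
  have hb : (R3 A Q B T).det ≠ 0 := hdet_ne _ ⟨hT, le_refl T⟩
  -- step 1 : det at T is positive
  have hdT : 0 < (R3 A Q B T).det := by
    have hP := (part2 A Q B hQ T hR3u (T/2) T hhalf hhalfT (le_refl T)).2
    set P := (R3 A Q B (T/2))⁻¹ * R3 A Q B (T/2 - T) * (R3 A Q B (-T))⁻¹ with hPdef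
    have hPdet_nonneg : 0 ≤ P.det := by
      exact hP.det_nonneg
    have h1 : R3 A Q B (T/2 - T) = -(R3 A Q B (T/2))ᵀ := by
      rw [show T/2 - T = -(T/2) by ring, R3_neg A Q B hQ]
    have h2 : R3 A Q B (-T) = -(R3 A Q B T)ᵀ := R3_neg A Q B hQ T
    have hPdet : P.det = ((R3 A Q B T).det)⁻¹ := by
      rw [hPdef, Matrix.det_mul, Matrix.det_mul, h1, h2, Matrix.det_nonsing_inv,
        Matrix.det_nonsing_inv, Matrix.det_neg, Matrix.det_neg, Matrix.det_transpose,
        Matrix.det_transpose, Ring.inverse_eq_inv', Fintype.card_fin]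
      have he : ((-1:ℝ))^n ≠ 0 := pow_ne_zero _ (by norm_num)
      field_simp
    rw [hPdet] at hPdet_nonneg
    have : 0 < ((R3 A Q B T).det)⁻¹ :=
      lt_of_le_of_ne hPdet_nonneg (Ne.symm (inv_ne_zero hb))
    exact inv_pos.mp this
  intro τ hτ
  rcases eq_or_lt_of_le hτ.2 with heq | hlt
  · rwa [heq]
  by_contra hnot
  have hτneg : (R3 A Q B τ).det < 0 :=
    lt_of_le_of_ne (le_of_not_gt hnot) (hdet_ne τ hτ)
  have hIVT := intermediate_value_Icc hτ.2 hcont.continuousOn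
  have h0mem : (0:ℝ) ∈ Set.Icc ((R3 A Q B τ).det) ((R3 A Q B T).det) :=
    ⟨hτneg.le, hdT.le⟩
  obtain ⟨c, hc, hc0⟩ := hIVT h0mem
  exact hdet_ne c ⟨lt_of_lt_of_le hτ.1 hc.1, hc.2⟩ hc0

lemma part3 (hQ : Q.IsSymm) (T : ℝ)
    (hR3u : ∀ τ ∈ Set.Ioc 0 T, IsUnit (R3 A Q B τ))
    (Hψ : Matrix (Fin n) (Fin n) ℝ) (hψ : Hψ.IsSymm)
    (hpsd : ∀ s ∈ Set.Ioc (0:ℝ) T, (Hψ + (R3 A Q B s)⁻¹ * R4 A Q B s).PosSemidef)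
    (s : ℝ) (hs : s ∈ Set.Ioc (0:ℝ) T) :
    ((R3 A Q B s)⁻¹ * (R3 A Q B s * Hψ + R4 A Q B s)).IsSymm ∧
    ((R3 A Q B s)⁻¹ * (R3 A Q B s * Hψ + R4 A Q B s)).PosSemidef := by
  have hUs : IsUnit (R3 A Q B s) := hR3u s hs
  have hds : IsUnit (R3 A Q B s).det := (Matrix.isUnit_iff_isUnit_det _).mp hUs
  have hkey : (R3 A Q B s)⁻¹ * (R3 A Q B s * Hψ + R4 A Q B s) =
      Hψ + (R3 A Q B s)⁻¹ * R4 A Q B s := by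
    rw [Matrix.mul_add, Matrix.nonsing_inv_mul_cancel_left _ _ hds]
  rw [hkey]
  refine ⟨?_, hpsd s hs⟩
  show _ᵀ = _
  rw [Matrix.transpose_add, S_symm A Q B hQ s hUs, hψ.eq]

end FlowLemmas

/-- Positivity lemma: (i) `det R₃(τ) > 0` on `(0,T]`; (ii) for `0 < τ ≤ s ≤ T` the matrix
`R₃(τ)⁻¹R₃(τ−s)R₃(−s)⁻¹` equals `S(τ) − S(s)` and is positive semidefinite; (iii) if
`Hψ` is symmetric with `Hψ + R₃(s)⁻¹R₄(s) ⪰ 0` for all `s ∈ (0,T]`, then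
`R₃(s)⁻¹(R₃(s)Hψ + R₄(s))` is symmetric positive semidefinite for all `s ∈ (0,T]`. -/
theorem positivity_lemma
    {n m : ℕ} (hm : 1 ≤ m) (hmn : m ≤ n)
    (A Q : Matrix (Fin n) (Fin n) ℝ) (B : Matrix (Fin n) (Fin m) ℝ)
    (hQ : Q.IsSymm) (hB : B.rank = m)
    (T : ℝ) (hT : 0 < T) (hKal : Kalman A B)
    (hR3 : ∀ τ ∈ Set.Ioc 0 T, IsUnit (R3 A Q B τ)) :
    letI S : ℝ → Matrix (Fin n) (Fin n) ℝ := fun r => (R3 A Q B r)⁻¹ * R4 A Q B r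
    (∀ τ ∈ Set.Ioc (0:ℝ) T, 0 < (R3 A Q B τ).det) ∧
    (∀ τ s : ℝ, 0 < τ → τ ≤ s → s ≤ T →
      (R3 A Q B τ)⁻¹ * R3 A Q B (τ - s) * (R3 A Q B (-s))⁻¹ = S τ - S s ∧
      ((R3 A Q B τ)⁻¹ * R3 A Q B (τ - s) * (R3 A Q B (-s))⁻¹).PosSemidef) ∧
    (∀ Hψ : Matrix (Fin n) (Fin n) ℝ, Hψ.IsSymm →
      (∀ s ∈ Set.Ioc (0:ℝ) T, (Hψ + (R3 A Q B s)⁻¹ * R4 A Q B s).PosSemidef) →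
      ∀ s ∈ Set.Ioc (0:ℝ) T,
        ((R3 A Q B s)⁻¹ * (R3 A Q B s * Hψ + R4 A Q B s)).IsSymm ∧
        ((R3 A Q B s)⁻¹ * (R3 A Q B s * Hψ + R4 A Q B s)).PosSemidef) := by

  exact ⟨part1 A Q B hQ T hT hR3,
    fun τ s hτ hτs hsT => part2 A Q B hQ T hR3 τ s hτ hτs hsT,
    fun Hψ hψ hpsd s hs => part3 A Q B hQ T hR3 Hψ hψ hpsd s hs⟩

end LQ
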